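/- Let n, d ≥ 1, let f : [n]^d → ℝ, let γ ∈ (0,1], and let B, B' ⊆ [n]^d be nonempty sets with |B| = |B'| = N such that p ≺ q for every p ∈ B and every q ∈ B'. Suppose there exist pairwise distinct points p_1,…,p_K ∈ B and pairwise distinct points q_1,…,q_K ∈ B' with f(p_i) < f(q_i) for every i ∈ [K], where K ≥ γ·N. If ⌈4/γ⌉ points are sampled independently and uniformly at random from B and, independently, ⌈4/γ⌉ points are sampled independently and uniformly at random from B', then with probability at least 1/2 there exist a sampled point p ∈ B and a sampled point q ∈ B' with f(p) < f(q); since p ≺ q, such a pair (p,q) forms a (1,2)-appearance of f. -/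
import Mathlib


/-- The coordinatewise (grid) partial order on `[n]^d`, modeled as `Fin d → Fin n`. -/
def gridLE {n d : ℕ} (x y : Fin d → Fin n) : Prop := ∀ i, x i ≤ y i

/-- Strict grid order: `x ≺ y` iff `x ≼ y` and `x ≠ y`. -/
def gridLT {n d : ℕ} (x y : Fin d → Fin n) : Prop := gridLE x y ∧ x ≠ y

/-- `x : Fin k → [n]^d` is a `π`-appearance of `f`: a chain `x 0 ≺ x 1 ≺ ⋯ ≺ x (k-1)`
whose `f`-values are ordered exactly as `π` orders `[k]`. -/
def IsPiAppearance {n d k : ℕ} (f : (Fin d → Fin n) → ℝ) (π : Equiv.Perm (Fin k))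
    (x : Fin k → Fin d → Fin n) : Prop :=
  (∀ i j : Fin k, i < j → gridLT (x i) (x j)) ∧
  (∀ i j : Fin k, f (x i) < f (x j) ↔ π i < π j)

/-- `f` restricted to `A` has no `π`-appearance. -/
def PiFreeOn {n d k : ℕ} (f : (Fin d → Fin n) → ℝ) (π : Equiv.Perm (Fin k))
    (A : Set (Fin d → Fin n)) : Prop :=
  ¬ ∃ x : Fin k → Fin d → Fin n, IsPiAppearance f π x ∧ ∀ i, x i ∈ A

/-- `f` is `π`-free. -/
def PiFree {n d k : ℕ} (f : (Fin d → Fin n) → ℝ) (π : Equiv.Perm (Fin k)) : Prop :=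
  PiFreeOn f π Set.univ

/-- The deletion distance of `f` from `π`-freeness: the minimum cardinality of a set `S`
of indices such that `f` restricted to the complement of `S` is `π`-free. -/
noncomputable def patternDeletionDist {n d k : ℕ} (f : (Fin d → Fin n) → ℝ)
    (π : Equiv.Perm (Fin k)) : ℕ :=
  sInf {s : ℕ | ∃ S : Set (Fin d → Fin n), S.ncard = s ∧ PiFreeOn f π Sᶜ}

/-- The Hamming distance of `f` from `π`-freeness: the minimum number of points where `f`
must be changed to obtain a `π`-free function. -/
noncomputable def patternHammingDist {n d k : ℕ} (f : (Fin d → Fin n) → ℝ)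
    (π : Equiv.Perm (Fin k)) : ℕ :=
  sInf {s : ℕ | ∃ g : (Fin d → Fin n) → ℝ, PiFree g π ∧ {x | f x ≠ g x}.ncard = s}

set_option maxHeartbeats 1000000 in
/-- (Median/sampling lemma.) Let `B, B'` be nonempty `N`-element subsets
of `[n]^d` with `p ≺ q` for all `p ∈ B, q ∈ B'`, and suppose there are `K ≥ γ·N` pairwise
distinct points `p_i ∈ B` and `q_i ∈ B'` with `f(p_i) < f(q_i)`. If `⌈4/γ⌉` points are
sampled uniformly and independently from each of `B` and `B'`, then with probability at
least `1/2` some sampled pair `(p, q)` satisfies `f(p) < f(q)` (and `p ≺ q`), i.e. forms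
a `(1,2)`-appearance. Probability is modeled by counting pairs of sample tuples. -/
theorem stmt9 (n d : ℕ) (hn : 1 ≤ n) (hd : 1 ≤ d)
    (f : (Fin d → Fin n) → ℝ) (γ : ℝ) (hγ0 : 0 < γ) (hγ1 : γ ≤ 1)
    (B B' : Finset (Fin d → Fin n)) (hB : B.Nonempty) (hB' : B'.Nonempty)
    (N : ℕ) (hBcard : B.card = N) (hB'card : B'.card = N)
    (hBB' : ∀ p ∈ B, ∀ q ∈ B', gridLT p q)
    (K : ℕ) (p q : Fin K → Fin d → Fin n)
    (hp : Function.Injective p) (hq : Function.Injective q)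
    (hpB : ∀ i, p i ∈ B) (hqB' : ∀ i, q i ∈ B')
    (hpq : ∀ i, f (p i) < f (q i))
    (hK : γ * (N : ℝ) ≤ (K : ℝ)) :
    (1 / 2 : ℝ) * ((B.card : ℝ) ^ (⌈(4 : ℝ) / γ⌉₊) * (B'.card : ℝ) ^ (⌈(4 : ℝ) / γ⌉₊)) ≤
      (Set.ncard {xy : (Fin (⌈(4 : ℝ) / γ⌉₊) → ↥B) × (Fin (⌈(4 : ℝ) / γ⌉₊) → ↥B') |
        ∃ i j, f ((xy.1 i).val) < f ((xy.2 j).val) ∧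
          gridLT ((xy.1 i).val) ((xy.2 j).val)} : ℝ) := by
  classical
  set s := ⌈(4 : ℝ) / γ⌉₊ with hs_def
  have hN1 : 1 ≤ N := hBcard ▸ Finset.card_pos.mpr hB
  have hNR : (1 : ℝ) ≤ (N : ℝ) := by exact_mod_cast hN1
  have hK1 : 1 ≤ K := by
    rcases Nat.eq_zero_or_pos K with h | h
    · exfalso; rw [h] at hK; push_cast at hK; nlinarith
    · exact h
  haveI : Nonempty (Fin K) := ⟨⟨0, hK1⟩⟩
  -- the value multiset and the median threshold
  have hVne : (Finset.univ.image (fun i : Fin K => f (p i))).Nonempty :=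
    Finset.Nonempty.image Finset.univ_nonempty _
  set V : Finset ℝ := Finset.univ.image (fun i : Fin K => f (p i)) with hV
  set T : Finset ℝ :=
    V.filter (fun t => K ≤ 2 * (Finset.univ.filter (fun i : Fin K => f (p i) ≤ t)).card)
    with hTdef
  have hTne : T.Nonempty := by
    refine ⟨V.max' hVne, Finset.mem_filter.mpr ⟨V.max'_mem hVne, ?_⟩⟩
    have hall : (Finset.univ.filter (fun i : Fin K => f (p i) ≤ V.max' hVne)) =
        Finset.univ := by
      refine Finset.filter_true_of_mem fun i _ => ?_
      exact V.le_max' _ (Finset.mem_image_of_mem _ (Finset.mem_univ i))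
    rw [hall, Finset.card_univ, Fintype.card_fin]; omega
  set t : ℝ := T.min' hTne with ht
  have htT : t ∈ T := T.min'_mem hTne
  have htV : t ∈ V := (Finset.mem_filter.mp htT).1
  have hLow : K ≤ 2 * (Finset.univ.filter (fun i : Fin K => f (p i) ≤ t)).card :=
    (Finset.mem_filter.mp htT).2
  -- the other half of the median property
  have hHigh : K ≤ 2 * (Finset.univ.filter (fun i : Fin K => t ≤ f (p i))).card := by
    set W : Finset (Fin K) := Finset.univ.filter (fun i => f (p i) < t) with hW
    have hsplit : W.card + (Finset.univ.filter (fun i : Fin K => t ≤ f (p i))).card = K := by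
      have h1 : (Finset.univ.filter (fun i : Fin K => t ≤ f (p i))) =
          Finset.univ.filter (fun i : Fin K => ¬ f (p i) < t) := by
        apply Finset.filter_congr; intro i _; simp [not_lt]
      rw [h1, hW, Finset.card_filter_add_card_filter_not, Finset.card_univ,
        Fintype.card_fin]
    rcases W.eq_empty_or_nonempty with hWe | hWne
    · rw [hWe] at hsplit; simp at hsplit; omega
    · have hWimne : (W.image (fun i => f (p i))).Nonempty := hWne.image _
      set t' : ℝ := (W.image (fun i => f (p i))).max' hWimne with ht'
      have ht'mem : t' ∈ W.image (fun i => f (p i)) := Finset.max'_mem _ _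
      obtain ⟨i₀, hi₀W, hi₀⟩ := Finset.mem_image.mp ht'mem
      have ht'V : t' ∈ V := by
        rw [hV]; rw [← hi₀]; exact Finset.mem_image_of_mem _ (Finset.mem_univ i₀)
      have ht'lt : t' < t := by
        rw [← hi₀]; exact (Finset.mem_filter.mp hi₀W).2
      have ht'notT : t' ∉ T := fun h => absurd (T.min'_le t' h) (by rw [← ht]; linarith)
      have hfilt : (Finset.univ.filter (fun i : Fin K => f (p i) ≤ t')) = W := by
        ext i
        simp only [Finset.mem_filter, Finset.mem_univ, true_and, hW]
        constructor
        · intro h; exact lt_of_le_of_lt h ht'lt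
        · intro h
          exact Finset.le_max' (W.image (fun i => f (p i))) (f (p i))
            (Finset.mem_image_of_mem _
              (Finset.mem_filter.mpr ⟨Finset.mem_univ i, h⟩))
      have hWsmall : ¬ K ≤ 2 * W.card := by
        intro h
        exact ht'notT (Finset.mem_filter.mpr ⟨ht'V, by rw [hfilt]; exact h⟩)
      omega
  -- low set in B and high set in B'
  set L : Finset (Fin d → Fin n) := B.filter (fun b => f b ≤ t) with hLdef
  set H : Finset (Fin d → Fin n) := B'.filter (fun b => t < f b) with hHdef
  have hLcard : K ≤ 2 * L.card := by
    have hle : (Finset.univ.filter (fun i : Fin K => f (p i) ≤ t)).card ≤ L.card := by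
      apply Finset.card_le_card_of_injOn p
      · intro i hi
        exact Finset.mem_filter.mpr ⟨hpB i, (Finset.mem_filter.mp hi).2⟩
      · exact fun a _ b _ h => hp h
    omega
  have hHcard : K ≤ 2 * H.card := by
    have hle : (Finset.univ.filter (fun i : Fin K => t ≤ f (p i))).card ≤ H.card := by
      apply Finset.card_le_card_of_injOn q
      · intro i hi
        refine Finset.mem_filter.mpr ⟨hqB' i, ?_⟩
        exact lt_of_le_of_lt (Finset.mem_filter.mp hi).2 (hpq i)
      · exact fun a _ b _ h => hq h
    omega
  -- cardinalities of complements
  have hLB : L.card + (B.filter (fun b => ¬ f b ≤ t)).card = N := by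
    rw [hLdef, Finset.card_filter_add_card_filter_not, hBcard]
  have hHB : H.card + (B'.filter (fun b => ¬ t < f b)).card = N := by
    rw [hHdef, Finset.card_filter_add_card_filter_not, hB'card]
  -- the key exponential estimate
  have hγ2 : 0 ≤ 1 - γ / 2 := by linarith
  have hpow : (1 - γ / 2) ^ s ≤ 1 / 4 := by
    have h1 : 1 - γ / 2 ≤ Real.exp (-(γ / 2)) := by
      have := Real.add_one_le_exp (-(γ / 2)); linarith
    have h2 : (1 - γ / 2) ^ s ≤ Real.exp (-(γ / 2)) ^ s := pow_le_pow_left₀ hγ2 h1 s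
    have h3 : Real.exp (-(γ / 2)) ^ s = Real.exp ((s : ℝ) * (-(γ / 2))) :=
      (Real.exp_nat_mul _ s).symm
    have hs4 : (4 : ℝ) / γ ≤ (s : ℝ) := Nat.le_ceil _
    have hγs : (4 : ℝ) ≤ γ * s := by
      have := mul_le_mul_of_nonneg_left hs4 hγ0.le
      rw [mul_div_cancel₀ _ (ne_of_gt hγ0)] at this
      linarith
    have h4 : (s : ℝ) * (-(γ / 2)) ≤ -2 := by nlinarith
    have h5 : Real.exp ((s : ℝ) * (-(γ / 2))) ≤ Real.exp (-2) := Real.exp_le_exp.mpr h4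
    have h6 : Real.exp (-2 : ℝ) ≤ 1 / 4 := by
      have he1 : (2 : ℝ) ≤ Real.exp 1 := by have := Real.add_one_le_exp (1 : ℝ); linarith
      have he2 : (4 : ℝ) ≤ Real.exp 2 := by
        have : Real.exp 2 = Real.exp 1 * Real.exp 1 := by
          rw [← Real.exp_add]; norm_num
        nlinarith [Real.exp_pos (1 : ℝ)]
      rw [Real.exp_neg]
      rw [div_eq_inv_mul, mul_one]
      exact inv_anti₀ (by norm_num) he2
    linarith
  -- complement cardinality bounds, in ℝ
  have hKR : γ * (N : ℝ) / 2 ≤ (K : ℝ) / 2 := by linarith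
  have hCb : ((B.filter (fun b => ¬ f b ≤ t)).card : ℝ) ≤ (1 - γ / 2) * N := by
    have h1 : ((B.filter (fun b => ¬ f b ≤ t)).card : ℝ) = (N : ℝ) - L.card := by
      rw [eq_sub_iff_add_eq, add_comm]; exact_mod_cast hLB
    have h2 : (K : ℝ) / 2 ≤ (L.card : ℝ) := by
      have : (K : ℝ) ≤ 2 * L.card := by exact_mod_cast hLcard
      linarith
    rw [h1]; nlinarith
  have hCb' : ((B'.filter (fun b => ¬ t < f b)).card : ℝ) ≤ (1 - γ / 2) * N := by
    have h1 : ((B'.filter (fun b => ¬ t < f b)).card : ℝ) = (N : ℝ) - H.card := by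
      rw [eq_sub_iff_add_eq, add_comm]; exact_mod_cast hHB
    have h2 : (K : ℝ) / 2 ≤ (H.card : ℝ) := by
      have : (K : ℝ) ≤ 2 * H.card := by exact_mod_cast hHcard
      linarith
    rw [h1]; nlinarith
  -- good tuple sets
  set G1 : Finset (Fin s → ↥B) :=
    Finset.univ.filter (fun x => ∃ i, (x i : Fin d → Fin n) ∈ L) with hG1def
  set G2 : Finset (Fin s → ↥B') :=
    Finset.univ.filter (fun y => ∃ j, (y j : Fin d → Fin n) ∈ H) with hG2def
  -- counting bad tuples on the B side
  have hBadB : (Finset.univ.filter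
      (fun x : Fin s → ↥B => ¬ ∃ i, (x i : Fin d → Fin n) ∈ L)).card ≤
      (B.filter (fun b => ¬ f b ≤ t)).card ^ s := by
    set D : Finset ↥B := B.attach.filter (fun b => ¬ f (b : Fin d → Fin n) ≤ t) with hD
    have hDcard : D.card = (B.filter (fun b => ¬ f b ≤ t)).card := by
      rw [hD]
      apply Finset.card_bij (fun (b : ↥B) _ => (b : Fin d → Fin n))
      · intro a ha
        exact Finset.mem_filter.mpr ⟨a.2, (Finset.mem_filter.mp ha).2⟩
      · intro a _ b _ h; exact Subtype.ext h
      · intro b hb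
        exact ⟨⟨b, (Finset.mem_filter.mp hb).1⟩,
          Finset.mem_filter.mpr ⟨Finset.mem_attach _ _, (Finset.mem_filter.mp hb).2⟩, rfl⟩
    calc (Finset.univ.filter
        (fun x : Fin s → ↥B => ¬ ∃ i, (x i : Fin d → Fin n) ∈ L)).card
        ≤ (Fintype.piFinset (fun _ : Fin s => D)).card := by
          apply Finset.card_le_card
          intro x hx
          rw [Fintype.mem_piFinset]
          intro i
          have hnx := (Finset.mem_filter.mp hx).2
          push_neg at hnx
          refine Finset.mem_filter.mpr ⟨Finset.mem_attach _ _, ?_⟩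
          intro hle
          exact hnx i (Finset.mem_filter.mpr ⟨(x i).2, hle⟩)
      _ = D.card ^ s := by
          rw [Fintype.card_piFinset]
          simp
      _ = (B.filter (fun b => ¬ f b ≤ t)).card ^ s := by rw [hDcard]
  have hBadB' : (Finset.univ.filter
      (fun y : Fin s → ↥B' => ¬ ∃ j, (y j : Fin d → Fin n) ∈ H)).card ≤
      (B'.filter (fun b => ¬ t < f b)).card ^ s := by
    set D : Finset ↥B' := B'.attach.filter (fun b => ¬ t < f (b : Fin d → Fin n)) with hD
    have hDcard : D.card = (B'.filter (fun b => ¬ t < f b)).card := by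
      rw [hD]
      apply Finset.card_bij (fun (b : ↥B') _ => (b : Fin d → Fin n))
      · intro a ha
        exact Finset.mem_filter.mpr ⟨a.2, (Finset.mem_filter.mp ha).2⟩
      · intro a _ b _ h; exact Subtype.ext h
      · intro b hb
        exact ⟨⟨b, (Finset.mem_filter.mp hb).1⟩,
          Finset.mem_filter.mpr ⟨Finset.mem_attach _ _, (Finset.mem_filter.mp hb).2⟩, rfl⟩
    calc (Finset.univ.filter
        (fun y : Fin s → ↥B' => ¬ ∃ j, (y j : Fin d → Fin n) ∈ H)).card
        ≤ (Fintype.piFinset (fun _ : Fin s => D)).card := by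
          apply Finset.card_le_card
          intro y hy
          rw [Fintype.mem_piFinset]
          intro j
          have hny := (Finset.mem_filter.mp hy).2
          push_neg at hny
          refine Finset.mem_filter.mpr ⟨Finset.mem_attach _ _, ?_⟩
          intro hlt
          exact hny j (Finset.mem_filter.mpr ⟨(y j).2, hlt⟩)
      _ = D.card ^ s := by
          rw [Fintype.card_piFinset]
          simp
      _ = (B'.filter (fun b => ¬ t < f b)).card ^ s := by rw [hDcard]
  -- total counts
  have hTot1 : G1.card + (Finset.univ.filter
      (fun x : Fin s → ↥B => ¬ ∃ i, (x i : Fin d → Fin n) ∈ L)).card = N ^ s := by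
    rw [hG1def, Finset.card_filter_add_card_filter_not, Finset.card_univ]
    rw [Fintype.card_fun]
    simp [hBcard]
  have hTot2 : G2.card + (Finset.univ.filter
      (fun y : Fin s → ↥B' => ¬ ∃ j, (y j : Fin d → Fin n) ∈ H)).card = N ^ s := by
    rw [hG2def, Finset.card_filter_add_card_filter_not, Finset.card_univ]
    rw [Fintype.card_fun]
    simp [hB'card]
  -- lower bounds on good counts, in ℝ
  have hNs0 : (0 : ℝ) ≤ (N : ℝ) ^ s := by positivity
  have hG1R : (3 / 4 : ℝ) * (N : ℝ) ^ s ≤ (G1.card : ℝ) := by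
    have h1 : ((B.filter (fun b => ¬ f b ≤ t)).card : ℝ) ^ s ≤ ((1 - γ / 2) * N) ^ s :=
      pow_le_pow_left₀ (Nat.cast_nonneg _) hCb s
    have h2 : ((1 - γ / 2) * (N : ℝ)) ^ s = (1 - γ / 2) ^ s * (N : ℝ) ^ s := mul_pow _ _ _
    have h3 : (1 - γ / 2) ^ s * (N : ℝ) ^ s ≤ (1 / 4) * (N : ℝ) ^ s :=
      mul_le_mul_of_nonneg_right hpow hNs0
    have h4 : (G1.card : ℝ) = (N : ℝ) ^ s - ((Finset.univ.filter
        (fun x : Fin s → ↥B => ¬ ∃ i, (x i : Fin d → Fin n) ∈ L)).card : ℝ) := by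
      rw [eq_sub_iff_add_eq]; exact_mod_cast hTot1
    have h5 : ((Finset.univ.filter
        (fun x : Fin s → ↥B => ¬ ∃ i, (x i : Fin d → Fin n) ∈ L)).card : ℝ) ≤
        ((B.filter (fun b => ¬ f b ≤ t)).card : ℝ) ^ s := by exact_mod_cast hBadB
    rw [h4]; rw [h2] at h1; linarith
  have hG2R : (3 / 4 : ℝ) * (N : ℝ) ^ s ≤ (G2.card : ℝ) := by
    have h1 : ((B'.filter (fun b => ¬ t < f b)).card : ℝ) ^ s ≤ ((1 - γ / 2) * N) ^ s :=
      pow_le_pow_left₀ (Nat.cast_nonneg _) hCb' s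
    have h2 : ((1 - γ / 2) * (N : ℝ)) ^ s = (1 - γ / 2) ^ s * (N : ℝ) ^ s := mul_pow _ _ _
    have h3 : (1 - γ / 2) ^ s * (N : ℝ) ^ s ≤ (1 / 4) * (N : ℝ) ^ s :=
      mul_le_mul_of_nonneg_right hpow hNs0
    have h4 : (G2.card : ℝ) = (N : ℝ) ^ s - ((Finset.univ.filter
        (fun y : Fin s → ↥B' => ¬ ∃ j, (y j : Fin d → Fin n) ∈ H)).card : ℝ) := by
      rw [eq_sub_iff_add_eq]; exact_mod_cast hTot2
    have h5 : ((Finset.univ.filter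
        (fun y : Fin s → ↥B' => ¬ ∃ j, (y j : Fin d → Fin n) ∈ H)).card : ℝ) ≤
        ((B'.filter (fun b => ¬ t < f b)).card : ℝ) ^ s := by exact_mod_cast hBadB'
    rw [h4]; rw [h2] at h1; linarith
  -- the product of good tuples lies in the target set
  have hsub : (↑(G1 ×ˢ G2) : Set ((Fin s → ↥B) × (Fin s → ↥B'))) ⊆
      {xy : (Fin s → ↥B) × (Fin s → ↥B') |
        ∃ i j, f ((xy.1 i).val) < f ((xy.2 j).val) ∧
          gridLT ((xy.1 i).val) ((xy.2 j).val)} := by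
    rintro ⟨x, y⟩ hxy
    rw [Finset.mem_coe, Finset.mem_product] at hxy
    obtain ⟨i, hiL⟩ := (Finset.mem_filter.mp hxy.1).2
    obtain ⟨j, hjH⟩ := (Finset.mem_filter.mp hxy.2).2
    refine ⟨i, j, ?_, hBB' _ (x i).2 _ (y j).2⟩
    exact lt_of_le_of_lt (Finset.mem_filter.mp hiL).2 (Finset.mem_filter.mp hjH).2
  have hncard : (G1 ×ˢ G2).card ≤
      Set.ncard {xy : (Fin s → ↥B) × (Fin s → ↥B') |
        ∃ i j, f ((xy.1 i).val) < f ((xy.2 j).val) ∧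
          gridLT ((xy.1 i).val) ((xy.2 j).val)} := by
    rw [← Set.ncard_coe_finset]
    exact Set.ncard_le_ncard hsub (Set.toFinite _)
  have hprod : (G1 ×ˢ G2).card = G1.card * G2.card := Finset.card_product _ _
  -- conclude
  have hfin : ((G1 ×ˢ G2).card : ℝ) ≤
      (Set.ncard {xy : (Fin s → ↥B) × (Fin s → ↥B') |
        ∃ i j, f ((xy.1 i).val) < f ((xy.2 j).val) ∧
          gridLT ((xy.1 i).val) ((xy.2 j).val)} : ℝ) := by exact_mod_cast hncard
  rw [hprod] at hfin
  push_cast at hfin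
  have hG1nn : (0 : ℝ) ≤ (G1.card : ℝ) := Nat.cast_nonneg _
  have hmul : (3 / 4 : ℝ) * (N : ℝ) ^ s * ((3 / 4 : ℝ) * (N : ℝ) ^ s) ≤
      (G1.card : ℝ) * (G2.card : ℝ) := by
    apply mul_le_mul hG1R hG2R (by positivity) hG1nn
  rw [hBcard, hB'card]
  nlinarith [hfin, hmul, hNs0]
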